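/- Let G be a finite simple graph with clique vertex partition π and G^π the associated clique-whiskered graph. The vertex cover ideal J(G^π) has linear quotients with respect to the lexicographic order induced from the vertex order w_{11} > w_{12} > … > w_{1r_1} > v_1 > w_{21} > … > v_{t−1} > w_{t1} > … > w_{t r_t} > v_t: enumerating the minimal vertex covers C_1, …, C_r of G^π so that X_{C_1} > X_{C_2} > … > X_{C_r} in this lexicographic order, for each j ∈ [r−1] the colon ideal ⟨X_{C_1}, …, X_{C_j}⟩ : X_{C_{j+1}} is generated by a set of variables. -/

import Mathlib

open scoped Classical

namespace PaperHS

/-- A set of vertices is a vertex cover of a simple graph if it meets every edge. -/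
def IsVertexCover {U : Type*} (H : SimpleGraph U) (C : Set U) : Prop :=
  ∀ ⦃a b : U⦄, H.Adj a b → a ∈ C ∨ b ∈ C

/-- A vertex cover is minimal if no proper subset is a vertex cover. -/
def IsMinVertexCover {U : Type*} (H : SimpleGraph U) (C : Set U) : Prop :=
  IsVertexCover H C ∧ ∀ D : Set U, D ⊂ C → ¬ IsVertexCover H D

/-- The clique-whiskered graph `G^π`. -/
def cliqueWhisker {V ι : Type*} (G : SimpleGraph V) (A : ι → Set V) :
    SimpleGraph (V ⊕ ι) :=
  SimpleGraph.fromRel (fun x y =>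
    match x, y with
    | Sum.inl a, Sum.inl b => G.Adj a b
    | Sum.inl a, Sum.inr i => a ∈ A i
    | _, _ => False)

/-- `lexGT lt C D` says the squarefree monomial `X_C` is strictly greater than
`X_D` in the lexicographic order induced by the variable order in which `x` is a
bigger variable than `y` whenever `lt y x`:  at the biggest variable `z` where
`C` and `D` differ, `z` belongs to `C`. -/
def lexGT {U : Type*} (lt : U → U → Prop) (C D : Finset U) : Prop :=
  ∃ z ∈ C, z ∉ D ∧ ∀ y : U, lt z y → (y ∈ C ↔ y ∈ D)

section Aux

variable {V ι : Type*} {G : SimpleGraph V} {A : ι → Set V}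

lemma adj_ll {a b : V} : (cliqueWhisker G A).Adj (Sum.inl a) (Sum.inl b) ↔ G.Adj a b := by
  constructor
  · rintro ⟨hne, h | h⟩
    · exact h
    · exact h.symm
  · intro h
    exact ⟨by simp [h.ne], Or.inl h⟩

lemma adj_lr {a : V} {i : ι} : (cliqueWhisker G A).Adj (Sum.inl a) (Sum.inr i) ↔ a ∈ A i := by
  constructor
  · rintro ⟨hne, h | h⟩
    · exact h
    · exact h.elim
  · intro h
    exact ⟨by simp, Or.inl h⟩

lemma adj_rl {a : V} {i : ι} : (cliqueWhisker G A).Adj (Sum.inr i) (Sum.inl a) ↔ a ∈ A i := by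
  rw [SimpleGraph.adj_comm]; exact adj_lr

lemma adj_rr {i j : ι} : ¬ (cliqueWhisker G A).Adj (Sum.inr i) (Sum.inr j) := by
  rintro ⟨hne, h | h⟩ <;> exact h

/-- Combinatorial characterization of minimal vertex covers of the whiskered graph. -/
def Good (G : SimpleGraph V) (A : ι → Set V) (C : Finset (V ⊕ ι)) : Prop :=
  (∀ a b : V, G.Adj a b → Sum.inl a ∈ C ∨ Sum.inl b ∈ C) ∧
  (∀ i : ι, ∀ a ∈ A i, Sum.inl a ∉ C → Sum.inr i ∈ C) ∧
  (∀ i : ι, Sum.inr i ∈ C → ∃ a ∈ A i, Sum.inl a ∉ C)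

lemma cover_mono {U : Type*} {H : SimpleGraph U} {D E : Set U} (h : D ⊆ E)
    (hD : IsVertexCover H D) : IsVertexCover H E :=
  fun _ _ hab => (hD hab).imp (fun h' => h h') (fun h' => h h')

lemma good_iff (hA : ∀ a : V, ∃! i, a ∈ A i) (hclique : ∀ i, G.IsClique (A i))
    (C : Finset (V ⊕ ι)) :
    IsMinVertexCover (cliqueWhisker G A) ↑C ↔ Good G A C := by
  constructor
  · rintro ⟨hcov, hmin⟩
    refine ⟨fun a b hab => ?_, fun i a ha hnot => ?_, fun i hi => ?_⟩
    · exact hcov (adj_ll.mpr hab)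
    · rcases hcov (adj_lr.mpr ha) with h | h
      · exact absurd h hnot
      · exact h
    · have hsub : (↑C \ {Sum.inr i} : Set (V ⊕ ι)) ⊂ ↑C :=
        Set.sdiff_singleton_ssubset.mpr hi
      have hnc := hmin _ hsub
      rw [IsVertexCover] at hnc
      push_neg at hnc
      obtain ⟨a, b, hab, haC, hbC⟩ := hnc
      rcases hcov hab with h | h
      · -- a ∈ C, a ∉ C \ {inr i} ⇒ a = inr i
        have ha' : a = Sum.inr i := by
          by_contra h'
          exact haC ⟨h, h'⟩
        subst ha'
        match b with
        | Sum.inl c =>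
          refine ⟨c, adj_rl.mp hab, fun hc => hbC ⟨hc, by simp⟩⟩
        | Sum.inr j => exact absurd hab adj_rr
      · have hb' : b = Sum.inr i := by
          by_contra h'
          exact hbC ⟨h, h'⟩
        subst hb'
        match a with
        | Sum.inl c =>
          refine ⟨c, adj_lr.mp hab, fun hc => haC ⟨hc, by simp⟩⟩
        | Sum.inr j => exact absurd hab adj_rr
  · rintro ⟨h1, h2, h3⟩
    have hcov : IsVertexCover (cliqueWhisker G A) ↑C := by
      intro a b hab
      match a, b with
      | Sum.inl a, Sum.inl b => exact h1 a b (adj_ll.mp hab)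
      | Sum.inl a, Sum.inr i =>
        by_cases h : Sum.inl a ∈ C
        · exact Or.inl h
        · exact Or.inr (h2 i a (adj_lr.mp hab) h)
      | Sum.inr i, Sum.inl a =>
        by_cases h : Sum.inl a ∈ C
        · exact Or.inr h
        · exact Or.inl (h2 i a (adj_rl.mp hab) h)
      | Sum.inr i, Sum.inr j => exact absurd hab adj_rr
    refine ⟨hcov, fun D hD hcovD => ?_⟩
    obtain ⟨x, hxC, hxD⟩ := Set.exists_of_ssubset hD
    have hx : IsVertexCover (cliqueWhisker G A) (↑C \ {x}) :=
      cover_mono (fun y hy => ⟨hD.subset hy, fun h => hxD (h ▸ hy)⟩) hcovD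
    match x with
    | Sum.inr i =>
      obtain ⟨a, ha, haC⟩ := h3 i hxC
      rcases hx (adj_lr.mpr ha : (cliqueWhisker G A).Adj (Sum.inl a) (Sum.inr i)) with h | h
      · exact haC h.1
      · exact h.2 rfl
    | Sum.inl a =>
      obtain ⟨i, hai, huniq⟩ := hA a
      by_cases hri : Sum.inr i ∈ C
      · obtain ⟨b, hb, hbC⟩ := h3 i hri
        have hba : b ≠ a := fun h => hbC (h ▸ hxC)
        have hadj : (cliqueWhisker G A).Adj (Sum.inl a) (Sum.inl b) :=
          adj_ll.mpr ((hclique i) hai hb (Ne.symm hba))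
        rcases hx hadj with h | h
        · exact h.2 rfl
        · exact hbC h.1
      · rcases hx (adj_lr.mpr hai : (cliqueWhisker G A).Adj (Sum.inl a) (Sum.inr i)) with h | h
        · exact h.2 rfl
        · exact hri h.1

/-- The key construction: from a lexGT witness produce a minimal cover differing
from `C` only by adding the witness. -/
lemma construct (hA : ∀ a : V, ∃! i, a ∈ A i) (hclique : ∀ i, G.IsClique (A i))
    (lt : (V ⊕ ι) → (V ⊕ ι) → Prop) (hlt : IsStrictTotalOrder (V ⊕ ι) lt)
    (hblock : ∀ i : ι, ∀ a ∈ A i, lt (Sum.inr i) (Sum.inl a))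
    {C D : Finset (V ⊕ ι)} (hC : Good G A C) (hD : Good G A D)
    {z : V ⊕ ι} (hzD : z ∈ D) (hzC : z ∉ C)
    (hagree : ∀ y, lt z y → (y ∈ D ↔ y ∈ C)) :
    ∃ D' : Finset (V ⊕ ι), Good G A D' ∧ z ∈ D' ∧
      (∀ y, lt z y → (y ∈ D' ↔ y ∈ C)) ∧ ↑D' ⊆ insert z (↑C : Set (V ⊕ ι)) := by
  match z with
  | Sum.inr i =>
    exfalso
    obtain ⟨b, hbi, hbD⟩ := hD.2.2 i hzD
    have hbC : Sum.inl b ∈ C := by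
      by_contra h
      exact hzC (hC.2.1 i b hbi h)
    exact hbD ((hagree _ (hblock i b hbi)).mpr hbC)
  | Sum.inl a =>
    obtain ⟨i, hai, huniq⟩ := hA a
    refine ⟨insert (Sum.inl a) (C.erase (Sum.inr i)), ?_, Finset.mem_insert_self _ _,
      fun y hy => ?_, ?_⟩
    · refine ⟨fun b c hbc => ?_, fun j b hb hnot => ?_, fun j hj => ?_⟩
      · rcases hC.1 b c hbc with h | h
        · exact Or.inl (Finset.mem_insert_of_mem (Finset.mem_erase.mpr ⟨by simp, h⟩))
        · exact Or.inr (Finset.mem_insert_of_mem (Finset.mem_erase.mpr ⟨by simp, h⟩))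
      · have hba : b ≠ a := by
          rintro rfl
          exact hnot (Finset.mem_insert_self _ _)
        have hbC : Sum.inl b ∉ C := by
          intro h
          exact hnot (Finset.mem_insert_of_mem (Finset.mem_erase.mpr ⟨by simp, h⟩))
        have hji : j ≠ i := by
          rintro rfl
          have hadj : G.Adj a b := (hclique j) hai hb (Ne.symm hba)
          rcases hC.1 a b hadj with h | h
          · exact hzC h
          · exact hbC h
        have hjC : Sum.inr j ∈ C := hC.2.1 j b hb hbC
        exact Finset.mem_insert_of_mem (Finset.mem_erase.mpr ⟨by simp [hji], hjC⟩)
      · have hjC : Sum.inr j ∈ C := by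
          rcases Finset.mem_insert.mp hj with h | h
          · exact absurd h (by simp)
          · exact (Finset.mem_erase.mp h).2
        have hji : j ≠ i := by
          rcases Finset.mem_insert.mp hj with h | h
          · exact absurd h (by simp)
          · rintro rfl
            exact (Finset.mem_erase.mp h).1 rfl
        obtain ⟨b, hb, hbC⟩ := hC.2.2 j hjC
        have hba : b ≠ a := by
          rintro rfl
          exact hji (huniq j hb)
        refine ⟨b, hb, fun h => ?_⟩
        rcases Finset.mem_insert.mp h with h | h
        · exact hba (Sum.inl.inj h)
        · exact hbC (Finset.mem_erase.mp h).2
    · have hyne : y ≠ Sum.inl a := by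
        rintro rfl
        exact hlt.irrefl _ hy
      have hyni : y ≠ Sum.inr i := by
        rintro rfl
        exact hlt.irrefl _ (hlt.trans _ _ _ (hblock i a hai) hy)
      simp [Finset.mem_insert, Finset.mem_erase, hyne, hyni]
    · intro x hx
      rcases Finset.mem_insert.mp hx with h | h
      · exact h ▸ Set.mem_insert _ _
      · exact Set.mem_insert_of_mem _ (Finset.mem_erase.mp h).2

end Aux

section Alg

open MvPolynomial

lemma sum_single_apply {σ : Type*} (C : Finset σ) (s : σ) :
    (∑ x ∈ C, Finsupp.single x (1 : ℕ)) s = if s ∈ C then 1 else 0 := by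
  classical
  rw [Finset.sum_apply']
  simp only [Finsupp.single_apply]
  exact Finset.sum_ite_eq' C s (fun _ => 1)

lemma prodX_eq {σ K : Type*} [CommSemiring K] (C : Finset σ) :
    ∏ x ∈ C, (X x : MvPolynomial σ K) = monomial (∑ x ∈ C, Finsupp.single x 1) 1 := by
  classical
  induction C using Finset.induction_on with
  | empty => simp
  | insert _ _ h ih =>
    rw [Finset.prod_insert h, Finset.sum_insert h, ih, ← pow_one (X _), X_pow_eq_monomial,
      monomial_mul, one_mul]

end Alg

theorem statement2 {V ι K : Type*} [Fintype V] [Fintype ι] [Field K]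
    (G : SimpleGraph V) (A : ι → Set V)
    (hA : ∀ a : V, ∃! i, a ∈ A i)
    (hclique : ∀ i, G.IsClique (A i))
    -- `lt` is a strict total order on the vertices of `G^π` such that, reading
    -- `lt x y` as "`y` is a bigger variable than `x`", each whisker vertex `v_i`
    -- comes right after its clique `A i`, i.e. the blocks
    -- `w_{i1} > ⋯ > w_{i r_i} > v_i` are consecutive:
    (lt : (V ⊕ ι) → (V ⊕ ι) → Prop)
    (hlt : IsStrictTotalOrder (V ⊕ ι) lt)
    (hblock : ∀ i : ι, ∀ a ∈ A i, lt (Sum.inr i) (Sum.inl a))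
    (hblocks1 : ∀ i j : ι, i ≠ j → ∀ a ∈ A i, ∀ b ∈ A j,
      (lt (Sum.inl a) (Sum.inl b) ↔ lt (Sum.inr i) (Sum.inr j)))
    (hblocks2 : ∀ i j : ι, i ≠ j → ∀ a ∈ A i,
      (lt (Sum.inl a) (Sum.inr j) ↔ lt (Sum.inr i) (Sum.inr j)))
    -- linear quotients with respect to the induced lexicographic order:
    (C : Finset (V ⊕ ι)) (hC : IsMinVertexCover (cliqueWhisker G A) ↑C) :
    ∃ S : Set (V ⊕ ι),
      (Ideal.span { m : MvPolynomial (V ⊕ ι) K | ∃ D : Finset (V ⊕ ι),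
            IsMinVertexCover (cliqueWhisker G A) ↑D ∧ lexGT lt D C ∧
            m = ∏ x ∈ D, MvPolynomial.X x }).colon
          ((Ideal.span {∏ x ∈ C, MvPolynomial.X x} : Ideal (MvPolynomial (V ⊕ ι) K)) :
            Set (MvPolynomial (V ⊕ ι) K))
        = Ideal.span (MvPolynomial.X '' S) := by
  classical
  have hCg : Good G A C := (good_iff hA hclique C).mp hC
  refine ⟨{z | ∃ D : Finset (V ⊕ ι), IsMinVertexCover (cliqueWhisker G A) ↑D ∧ lexGT lt D C ∧
      z ∈ D ∧ z ∉ C ∧ (↑D : Set (V ⊕ ι)) ⊆ insert z ↑C}, ?_⟩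
  have hT : { m : MvPolynomial (V ⊕ ι) K | ∃ D : Finset (V ⊕ ι),
        IsMinVertexCover (cliqueWhisker G A) ↑D ∧ lexGT lt D C ∧
        m = ∏ x ∈ D, MvPolynomial.X x }
      = (fun e => MvPolynomial.monomial e (1 : K)) ''
        {e | ∃ D : Finset (V ⊕ ι), IsMinVertexCover (cliqueWhisker G A) ↑D ∧ lexGT lt D C ∧
          e = ∑ x ∈ D, Finsupp.single x 1} := by
    ext m
    constructor
    · rintro ⟨D, h1, h2, rfl⟩
      exact ⟨_, ⟨D, h1, h2, rfl⟩, (prodX_eq D).symm⟩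
    · rintro ⟨e, ⟨D, h1, h2, rfl⟩, rfl⟩
      exact ⟨D, h1, h2, (prodX_eq D).symm⟩
  rw [hT]
  ext g
  rw [Ideal.mem_colon_span_singleton, prodX_eq C, MvPolynomial.mem_ideal_span_monomial_image,
    MvPolynomial.mem_ideal_span_X_image]
  constructor
  · intro h m hm
    have hmem : m + (∑ x ∈ C, Finsupp.single x 1) ∈
        (g * MvPolynomial.monomial (∑ x ∈ C, Finsupp.single x 1) (1 : K)).support := by
      rw [MvPolynomial.mem_support_iff, MvPolynomial.coeff_mul_monomial, mul_one]
      exact MvPolynomial.mem_support_iff.mp hm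
    obtain ⟨e, ⟨D, hDmin, hDlex, rfl⟩, hle⟩ := h _ hmem
    obtain ⟨z, hzD, hzC, hag⟩ := hDlex
    have hDg : Good G A D := (good_iff hA hclique D).mp hDmin
    obtain ⟨D', hD'g, hzD', hag', hsub'⟩ :=
      construct hA hclique lt hlt hblock hCg hDg hzD hzC hag
    refine ⟨z, ⟨D', (good_iff hA hclique D').mpr hD'g, ⟨z, hzD', hzC, hag'⟩, hzD', hzC, hsub'⟩, ?_⟩
    have h1 := Finsupp.le_def.mp hle z
    rw [Finsupp.add_apply, sum_single_apply, sum_single_apply, if_pos hzD, if_neg hzC] at h1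
    omega
  · intro h m' hm'
    rw [MvPolynomial.mem_support_iff, MvPolynomial.coeff_mul_monomial'] at hm'
    by_cases hle : (∑ x ∈ C, Finsupp.single x 1) ≤ m'
    swap
    · rw [if_neg hle] at hm'; exact absurd rfl hm'
    rw [if_pos hle, mul_one] at hm'
    obtain ⟨z, ⟨D, hDmin, hDlex, hzD, hzC, hsub⟩, hz⟩ :=
      h _ (MvPolynomial.mem_support_iff.mpr hm')
    refine ⟨∑ x ∈ D, Finsupp.single x 1, ⟨D, hDmin, hDlex, rfl⟩, Finsupp.le_def.mpr fun s => ?_⟩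
    rw [sum_single_apply]
    by_cases hsD : s ∈ D
    swap
    · simp [hsD]
    rw [if_pos hsD]
    rcases hsub hsD with h' | h'
    · -- s = z
      subst h'
      have hz' : m' s - (∑ x ∈ C, Finsupp.single x 1) s ≠ 0 := by
        simpa [Finsupp.tsub_apply] using hz
      omega
    · have := Finsupp.le_def.mp hle s
      rw [sum_single_apply, if_pos (Finset.mem_coe.mp h')] at this
      omega


end PaperHS
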